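/- arXiv:1011.1629 — 2 statements merged into one kernel-verified Lean document; each statement's English description precedes it below -/
import Mathlib

section
/- Let ε ∈ [0,1], let P be a 1-dimensional linear subspace of ℝ^n, let X be a k-dimensional linear subspace of ℝ^n, and let w ∈ X be a unit vector. If δ(P, X) > ε, then |π_P(w) − w| ≥ ε/2, where π_P is the orthogonal projection onto P. -/
open MeasureTheory Set ENNReal RealInnerProductSpace
noncomputable section

abbrev E (n : ℕ) := EuclideanSpace ℝ (Fin n)

def projL {n : ℕ} (V : Submodule ℝ (E n)) : E n →L[ℝ] E n :=
  V.subtypeL.comp (V.orthogonalProjection)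

/-- δ(P,X) := |v − π_X(v)| for a line P spanned by the unit vector v. -/
def deltaLine {n : ℕ} (v : E n) (X : Submodule ℝ (E n)) : ℝ := ‖v - projL X v‖

theorem stmt1 (n k : ℕ) (ε : ℝ) (hε : ε ∈ Set.Icc (0 : ℝ) 1)
    (v : E n) (hv : ‖v‖ = 1)
    (X : Submodule ℝ (E n)) (hX : Module.finrank ℝ X = k)
    (w : E n) (hwX : w ∈ X) (hw : ‖w‖ = 1)
    (h : deltaLine v X > ε) :
    ‖projL (Submodule.span ℝ {v}) w - w‖ ≥ ε / 2 := by
  obtain ⟨hε0, hε1⟩ := hε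
  set c : ℝ := ⟪v, w⟫ with hc
  set p : E n := projL X v with hp
  -- projection onto the line
  have hproj : projL (Submodule.span ℝ {v}) w = c • v := by
    simp only [projL, ContinuousLinearMap.comp_apply, Submodule.subtypeL_apply]
    exact Submodule.starProjection_unit_singleton ℝ hv w
  -- orthogonality: v - p ⊥ w
  have horth : ⟪v - p, w⟫ = 0 := by
    have h0 := Submodule.sub_starProjection_mem_orthogonal (K := X) v w hwX
    rw [real_inner_comm]; exact h0
  have hcp : c = ⟪p, w⟫ := by
    have : ⟪v, w⟫ - ⟪p, w⟫ = 0 := by rw [← inner_sub_left]; exact horth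
    linarith
  have hcabs : |c| ≤ ‖p‖ := by
    calc |c| = |⟪p, w⟫| := by rw [hcp]
    _ ≤ ‖p‖ * ‖w‖ := abs_real_inner_le_norm p w
    _ = ‖p‖ := by rw [hw, mul_one]
  -- Pythagoras: ‖v‖² = ‖p‖² + ‖v - p‖²
  have hpv : ⟪p, v - p⟫ = 0 := by
    have := Submodule.sub_starProjection_mem_orthogonal (K := X) v
    have hpX : p ∈ X := by
      simp only [hp, projL, ContinuousLinearMap.comp_apply, Submodule.subtypeL_apply]
      exact (X.orthogonalProjection v).2
    exact this p hpX
  have hpyth : 1 = ‖p‖ ^ 2 + ‖v - p‖ ^ 2 := by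
    have : ‖p + (v - p)‖ ^ 2 = ‖p‖ ^ 2 + ‖v - p‖ ^ 2 := by
      rw [norm_add_sq_real, hpv]; ring
    rw [add_sub_cancel, hv] at this
    linarith
  have hδ : deltaLine v X = ‖v - p‖ := rfl
  have hδε : ε < ‖v - p‖ := by rw [← hδ]; exact h
  -- ‖c • v - w‖² = 1 - c²
  have hnorm : ‖c • v - w‖ ^ 2 = 1 - c ^ 2 := by
    rw [norm_sub_sq_real, norm_smul, real_inner_smul_left, hv, hw]
    simp only [norm_mul, Real.norm_eq_abs, mul_one]
    rw [← hc, sq_abs]; ring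
  have hεsq : ε ^ 2 < ‖v - p‖ ^ 2 := by
    have := sq_lt_sq' (by linarith [norm_nonneg (v - p)] : -‖v - p‖ < ε) hδε
    linarith
  have hkey : ε ^ 2 ≤ ‖c • v - w‖ ^ 2 := by
    have h1 : c ^ 2 ≤ ‖p‖ ^ 2 := by
      have := sq_le_sq' (by linarith [abs_nonneg c, neg_abs_le c] : -‖p‖ ≤ c)
        (le_trans (le_abs_self c) hcabs)
      exact this
    rw [hnorm]; nlinarith
  have : ε ≤ ‖c • v - w‖ := by
    have := Real.sqrt_le_sqrt hkey
    rwa [Real.sqrt_sq hε0, Real.sqrt_sq (norm_nonneg _)] at this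
  rw [hproj]
  linarith
end
end

section
/- Let V and W be e-dimensional linear subspaces of ℝ^n with orthonormal bases v_1,…,v_e and w_1,…,w_e respectively. Extend the inner product to ⋀^e ℝ^n by ⟨v_1∧…∧v_e, w_1∧…∧w_e⟩ = det(⟨v_i, w_j⟩). If ‖π_V − π_W‖ = |a| (operator norm), then |1 − a²| ≥ ⟨v_1∧…∧v_e, w_1∧…∧w_e⟩². -/
open MeasureTheory Set ENNReal RealInnerProductSpace
noncomputable section

open Matrix in
lemma keyM {e : ℕ} (H : Matrix (Fin e) (Fin e) ℝ)
    (h1 : ∀ c : Fin e → ℝ, ∑ j, (H.mulVec c j)^2 ≤ ∑ i, (c i)^2) :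
    H.det ^ 2 ≤ 1 ∧ ∀ c : Fin e → ℝ, H.det ^ 2 * ∑ i, (c i)^2 ≤ ∑ j, (H.mulVec c j)^2 := by
  classical
  set M : Matrix (Fin e) (Fin e) ℝ := Hᵀ * H with hMdef
  have hM : M.IsHermitian := by
    rw [hMdef, ← Matrix.conjTranspose_eq_transpose_of_trivial]
    exact Matrix.isHermitian_conjTranspose_mul_self H
  set b := hM.eigenvectorBasis with hb
  set lam := hM.eigenvalues with hlam
  -- quadratic form identity
  have hdot : ∀ c : Fin e → ℝ, c ⬝ᵥ (M *ᵥ c) = ∑ j, (H.mulVec c j)^2 := by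
    intro c
    have h : M *ᵥ c = Hᵀ *ᵥ (H *ᵥ c) := by rw [Matrix.mulVec_mulVec]
    rw [h, Matrix.dotProduct_mulVec, Matrix.vecMul_transpose]
    simp [dotProduct, sq]
  -- inner product on EuclideanSpace is dotProduct
  have hinner : ∀ x y : EuclideanSpace ℝ (Fin e), ⟪x, y⟫ = (x : Fin e → ℝ) ⬝ᵥ (y : Fin e → ℝ) := by
    intro x y
    simp [PiLp.inner_apply, dotProduct, RCLike.inner_apply, mul_comm]
  -- expansion of quadratic form in eigenbasis
  have hquad : ∀ c : EuclideanSpace ℝ (Fin e),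
      (c : Fin e → ℝ) ⬝ᵥ (M *ᵥ (c : Fin e → ℝ)) = ∑ i, lam i * (b.repr c i)^2 := by
    intro c
    have hexp : (M *ᵥ (c : Fin e → ℝ)) = ∑ i, (b.repr c i * lam i) • (b i : Fin e → ℝ) := by
      conv_lhs => rw [← b.sum_repr c]
      rw [← Matrix.mulVecLin_apply]
      rw [show ((∑ i, b.repr c i • b i : EuclideanSpace ℝ (Fin e)) : Fin e → ℝ)
            = ∑ i, b.repr c i • (b i : Fin e → ℝ) by simp]
      rw [map_sum]
      refine Finset.sum_congr rfl fun i _ => ?_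
      have h2 : M *ᵥ (b i : Fin e → ℝ) = lam i • (b i : Fin e → ℝ) := hM.mulVec_eigenvectorBasis i
      rw [_root_.map_smul, Matrix.mulVecLin_apply, h2, smul_smul, mul_comm]
    calc (c : Fin e → ℝ) ⬝ᵥ (M *ᵥ (c : Fin e → ℝ))
        = ⟪c, WithLp.toLp 2 (M *ᵥ (c : Fin e → ℝ))⟫ := (hinner c (WithLp.toLp 2 (M *ᵥ (c : Fin e → ℝ)))).symm
      _ = ∑ i, lam i * (b.repr c i)^2 := by
          rw [show WithLp.toLp 2 (M *ᵥ (c : Fin e → ℝ))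
                = ∑ i, (b.repr c i * lam i) • b i by rw [hexp]; simp]
          rw [inner_sum]
          refine Finset.sum_congr rfl fun i _ => ?_
          rw [real_inner_smul_right, real_inner_comm, ← b.repr_apply_apply]
          ring
  have hbb : ∀ i, (b i : Fin e → ℝ) ⬝ᵥ (b i : Fin e → ℝ) = 1 := by
    intro i
    rw [← hinner (b i) (b i), real_inner_self_eq_norm_sq, b.orthonormal.1 i]
    norm_num
  have hlam_eq : ∀ i, lam i = ∑ j, (H.mulVec (b i : Fin e → ℝ) j)^2 := by
    intro i
    rw [← hdot]
    have h2 : M *ᵥ (b i : Fin e → ℝ) = lam i • (b i : Fin e → ℝ) := hM.mulVec_eigenvectorBasis i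
    rw [h2, dotProduct_smul, smul_eq_mul, hbb, mul_one]
  have hlam_nonneg : ∀ i, 0 ≤ lam i := by
    intro i; rw [hlam_eq i]; positivity
  have hlam_le_one : ∀ i, lam i ≤ 1 := by
    intro i
    calc lam i = ∑ j, (H.mulVec (b i : Fin e → ℝ) j)^2 := hlam_eq i
      _ ≤ ∑ j, ((b i : Fin e → ℝ) j)^2 := h1 _
      _ = 1 := by
          have := hbb i
          simpa [dotProduct, sq] using this
  have hprod : H.det ^ 2 = ∏ i, lam i := by
    have h3 : M.det = ∏ i, lam i := by
      have := hM.det_eq_prod_eigenvalues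
      simpa using this
    rw [← h3, hMdef, Matrix.det_mul, Matrix.det_transpose, sq]
  have hdet_le_one : H.det ^ 2 ≤ 1 := by
    rw [hprod]
    exact Finset.prod_le_one (fun i _ => hlam_nonneg i) (fun i _ => hlam_le_one i)
  refine ⟨hdet_le_one, fun c => ?_⟩
  have hlam_ge : ∀ i, H.det ^ 2 ≤ lam i := by
    intro i
    rw [hprod, ← Finset.mul_prod_erase Finset.univ lam (Finset.mem_univ i)]
    calc lam i * ∏ j ∈ Finset.univ.erase i, lam j
        ≤ lam i * 1 := by
          refine mul_le_mul_of_nonneg_left ?_ (hlam_nonneg i)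
          exact Finset.prod_le_one (fun j _ => hlam_nonneg j) (fun j _ => hlam_le_one j)
      _ = lam i := mul_one _
  have hrepr : ∑ i, (b.repr (WithLp.toLp 2 c) i)^2 = ∑ i, (c i)^2 := by
    have h4 := b.repr.inner_map_map (WithLp.toLp 2 c) (WithLp.toLp 2 c)
    rw [hinner, hinner] at h4
    simpa [dotProduct, sq] using h4
  calc H.det ^ 2 * ∑ i, (c i)^2
      = ∑ i, H.det ^ 2 * (b.repr (WithLp.toLp 2 c) i)^2 := by
        rw [← hrepr, Finset.mul_sum]
    _ ≤ ∑ i, lam i * (b.repr (WithLp.toLp 2 c) i)^2 := by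
        refine Finset.sum_le_sum fun i _ => ?_
        exact mul_le_mul_of_nonneg_right (hlam_ge i) (sq_nonneg _)
    _ = c ⬝ᵥ (M *ᵥ c) := (hquad (WithLp.toLp 2 c)).symm
    _ = ∑ j, (H.mulVec c j)^2 := hdot c

lemma sq_le_imp {a b : ℝ} (ha : 0 ≤ a) (hb : 0 ≤ b) (h : a^2 ≤ b^2) : a ≤ b := by nlinarith

lemma projL_mem {n : ℕ} (V : Submodule ℝ (E n)) (x : E n) : projL V x ∈ V :=
  (V.orthogonalProjection x).2

lemma projL_eq_self {n : ℕ} (V : Submodule ℝ (E n)) {x : E n} (hx : x ∈ V) : projL V x = x := by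
  simpa [projL] using Submodule.starProjection_eq_self_iff.mpr hx

lemma sub_projL_orth {n : ℕ} (V : Submodule ℝ (E n)) (x : E n) :
    ∀ u ∈ V, ⟪u, x - projL V x⟫ = 0 := by
  intro u hu
  have h := Submodule.sub_starProjection_mem_orthogonal (K := V) x
  exact (Submodule.mem_orthogonal V (x - projL V x)).1 h u hu

lemma pyth {n : ℕ} (V : Submodule ℝ (E n)) (x : E n) :
    ‖projL V x‖^2 + ‖x - projL V x‖^2 = ‖x‖^2 := by
  have h0 : ⟪projL V x, x - projL V x⟫ = 0 :=
    sub_projL_orth V x _ (projL_mem V x)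
  have : x = projL V x + (x - projL V x) := by abel
  conv_rhs => rw [this]
  rw [norm_add_sq_real, h0]
  ring

lemma projL_eq_sum {n e : ℕ} {W : Submodule ℝ (E n)} {w : Fin e → E n}
    (hw : Orthonormal ℝ w) (hwW : Submodule.span ℝ (Set.range w) = W) (x : E n) :
    projL W x = ∑ j, ⟪w j, x⟫ • w j := by
  have hm : ∀ i, w i ∈ W := fun i => hwW ▸ Submodule.subset_span ⟨i, rfl⟩
  have hspan : ⊤ ≤ Submodule.span ℝ (Set.range (Set.codRestrict w W hm)) := by
    rintro ⟨x, hx⟩ -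
    have hx' : x ∈ Submodule.span ℝ (Set.range w) := hwW.symm ▸ hx
    obtain ⟨c, hc⟩ := (Submodule.mem_span_range_iff_exists_fun ℝ).1 hx'
    have hxe : (⟨x, hx⟩ : W) = ∑ i, c i • Set.codRestrict w W hm i := by
      apply Subtype.ext
      push_cast
      exact hc.symm
    rw [hxe]
    exact Submodule.sum_mem _ fun i _ =>
      Submodule.smul_mem _ _ (Submodule.subset_span ⟨i, rfl⟩)
  let bw : OrthonormalBasis (Fin e) ℝ W :=
    OrthonormalBasis.mk (hw.codRestrict W hm) hspan
  have hbw : ∀ j, (bw j : E n) = w j := fun j => by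
    simp [bw, OrthonormalBasis.coe_mk, Set.codRestrict]
  have h := bw.orthogonalProjectionOnto_apply_eq_sum x
  have : projL W x = ((W.orthogonalProjectionOnto x : W) : E n) := rfl
  rw [this, h]
  push_cast
  refine Finset.sum_congr rfl fun j _ => by rw [hbw]

set_option maxHeartbeats 2000000 in
theorem stmt4 (n e : ℕ) (V W : Submodule ℝ (E n))
    (v w : Fin e → E n) (hv : Orthonormal ℝ v) (hw : Orthonormal ℝ w)
    (hvV : Submodule.span ℝ (Set.range v) = V)
    (hwW : Submodule.span ℝ (Set.range w) = W)
    (a : ℝ) (ha : ‖projL V - projL W‖ = |a|) :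
    |1 - a ^ 2| ≥ (Matrix.det (Matrix.of fun i j => ⟪v i, w j⟫)) ^ 2 := by
  classical
  obtain ⟨G, hG⟩ : ∃ G : Matrix (Fin e) (Fin e) ℝ, G = Matrix.of fun i j => ⟪v i, w j⟫ := ⟨_, rfl⟩
  obtain ⟨d, hd⟩ : ∃ d : ℝ, d = G.det := ⟨_, rfl⟩
  rw [← hG, ← hd]
  -- norms of orthonormal combinations
  have hnormv : ∀ c : Fin e → ℝ, ‖∑ i, c i • v i‖^2 = ∑ i, (c i)^2 := by
    intro c
    rw [← real_inner_self_eq_norm_sq]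
    simpa [sq] using hv.inner_sum c c Finset.univ
  have hnormw : ∀ c : Fin e → ℝ, ‖∑ i, c i • w i‖^2 = ∑ i, (c i)^2 := by
    intro c
    rw [← real_inner_self_eq_norm_sq]
    simpa [sq] using hw.inner_sum c c Finset.univ
  -- squared norms of projections as coordinate sums
  have hQnormsq : ∀ x : E n, ‖projL W x‖^2 = ∑ j, ⟪w j, x⟫^2 := by
    intro x
    rw [projL_eq_sum hw hwW x, ← real_inner_self_eq_norm_sq]
    simpa [sq] using hw.inner_sum (fun j => ⟪w j, x⟫) (fun j => ⟪w j, x⟫) Finset.univ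
  have hPnormsq : ∀ x : E n, ‖projL V x‖^2 = ∑ j, ⟪v j, x⟫^2 := by
    intro x
    rw [projL_eq_sum hv hvV x, ← real_inner_self_eq_norm_sq]
    simpa [sq] using hv.inner_sum (fun j => ⟪v j, x⟫) (fun j => ⟪v j, x⟫) Finset.univ
  -- norm of projection is ≤ norm
  have hQle : ∀ x : E n, ‖projL W x‖^2 ≤ ‖x‖^2 := by
    intro x; have := pyth W x; nlinarith [sq_nonneg ‖x - projL W x‖]
  have hPle : ∀ x : E n, ‖projL V x‖^2 ≤ ‖x‖^2 := by
    intro x; have := pyth V x; nlinarith [sq_nonneg ‖x - projL V x‖]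
  -- coordinates of Q on combinations of v
  have hQcoord : ∀ (c : Fin e → ℝ) (j : Fin e),
      ⟪w j, ∑ i, c i • v i⟫ = G.transpose.mulVec c j := by
    intro c j
    rw [inner_sum]
    simp only [real_inner_smul_right]
    refine Finset.sum_congr rfl fun i _ => ?_
    rw [real_inner_comm]
    simp [Matrix.mulVec, dotProduct, hG, mul_comm]
  have hPcoord : ∀ (c : Fin e → ℝ) (i : Fin e),
      ⟪v i, ∑ j, c j • w j⟫ = G.mulVec c i := by
    intro c i
    rw [inner_sum]
    simp only [real_inner_smul_right]
    simp [Matrix.mulVec, dotProduct, hG, mul_comm]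
  -- hypotheses for keyM
  have h1T : ∀ c : Fin e → ℝ, ∑ j, (G.transpose.mulVec c j)^2 ≤ ∑ i, (c i)^2 := by
    intro c
    have := hQle (∑ i, c i • v i)
    rw [hQnormsq, hnormv] at this
    simpa [fun j => (hQcoord c j).symm] using this
  have h1 : ∀ c : Fin e → ℝ, ∑ j, (G.mulVec c j)^2 ≤ ∑ i, (c i)^2 := by
    intro c
    have := hPle (∑ j, c j • w j)
    rw [hPnormsq, hnormw] at this
    simpa [fun i => (hPcoord c i).symm] using this
  obtain ⟨hd2, hkey⟩ := keyM G h1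
  obtain ⟨-, hkeyT⟩ := keyM G.transpose h1T
  rw [Matrix.det_transpose] at hkeyT
  rw [← hd] at hd2 hkey hkeyT
  -- Step C
  have stepCV : ∀ z ∈ V, d^2 * ‖z‖^2 ≤ ‖projL W z‖^2 := by
    intro z hz
    rw [← hvV] at hz
    obtain ⟨c, rfl⟩ := (Submodule.mem_span_range_iff_exists_fun ℝ).1 hz
    rw [hQnormsq, hnormv]
    calc d^2 * ∑ i, (c i)^2 ≤ ∑ j, (G.transpose.mulVec c j)^2 := hkeyT c
      _ = ∑ j, ⟪w j, ∑ i, c i • v i⟫^2 := by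
          refine Finset.sum_congr rfl fun j _ => by rw [hQcoord]
  have stepCW : ∀ z ∈ W, d^2 * ‖z‖^2 ≤ ‖projL V z‖^2 := by
    intro z hz
    rw [← hwW] at hz
    obtain ⟨c, rfl⟩ := (Submodule.mem_span_range_iff_exists_fun ℝ).1 hz
    rw [hPnormsq, hnormw]
    calc d^2 * ∑ i, (c i)^2 ≤ ∑ j, (G.mulVec c j)^2 := hkey c
      _ = ∑ j, ⟪v j, ∑ i, c i • w i⟫^2 := by
          refine Finset.sum_congr rfl fun j _ => by rw [hPcoord]
  -- pointwise bound for P on W-orthogonal vectors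
  have hVbound : ∀ y : E n, (∀ u ∈ W, ⟪u, y⟫ = 0) → ‖projL V y‖^2 ≤ (1 - d^2) * ‖y‖^2 := by
    intro y hy
    set z := projL V y with hz
    have hzV : z ∈ V := projL_mem V y
    have hzy : ⟪z, y⟫ = ‖z‖^2 := by
      have h0 : ⟪z, y - z⟫ = 0 := sub_projL_orth V y z hzV
      have h6 : ⟪z, y⟫ = ⟪z, z⟫ + ⟪z, y - z⟫ := by
        rw [← inner_add_right]; congr 1; abel
      rw [h6, h0, real_inner_self_eq_norm_sq, add_zero]
    have hQz0 : ⟪projL W z, y⟫ = 0 := hy _ (projL_mem W z)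
    have hzy2 : ⟪z - projL W z, y⟫ = ‖z‖^2 := by
      rw [inner_sub_left, hQz0, sub_zero, hzy]
    have hsub : ‖z - projL W z‖^2 ≤ (1 - d^2) * ‖z‖^2 := by
      have h3 := pyth W z
      have h4 := stepCV z hzV
      nlinarith
    have hcs : ‖z‖^2 ≤ ‖z - projL W z‖ * ‖y‖ := by
      rw [← hzy2]; exact real_inner_le_norm _ _
    by_cases hz0 : ‖z‖ = 0
    · rw [hz0]
      have h7 : (0:ℝ) ≤ (1 - d^2) * ‖y‖^2 := by
        nlinarith [sq_nonneg ‖z - projL W z‖, sq_nonneg ‖y‖, sq_nonneg ‖z‖, hsub]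
      simpa using h7
    · have hzpos : 0 < ‖z‖^2 := by positivity
      nlinarith [sq_nonneg (‖z - projL W z‖ * ‖y‖), norm_nonneg (z - projL W z), norm_nonneg y,
        mul_self_nonneg (‖z - projL W z‖ - ‖y‖)]
  -- pointwise bound for the difference
  have hpoint : ∀ x : E n, ‖(projL V - projL W) x‖^2 ≤ (1 - d^2) * ‖x‖^2 := by
    intro x
    set u := projL V (x - projL W x) with hu
    set r := projL W x - projL V (projL W x) with hr
    have heq : (projL V - projL W) x = u - r := by
      rw [ContinuousLinearMap.sub_apply, hu, hr, map_sub]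
      abel
    have horth : ⟪u, r⟫ = 0 := by
      have h8 := sub_projL_orth V (projL W x) u (projL_mem V _)
      simpa [hr] using h8
    have hsum : ‖(projL V - projL W) x‖^2 = ‖u‖^2 + ‖r‖^2 := by
      rw [heq, norm_sub_sq_real, horth]; ring
    have hxQ : ∀ z ∈ W, ⟪z, x - projL W x⟫ = 0 := fun z hz => sub_projL_orth W x z hz
    have hub : ‖u‖^2 ≤ (1 - d^2) * ‖x - projL W x‖^2 := hVbound _ hxQ
    have hrb : ‖r‖^2 ≤ (1 - d^2) * ‖projL W x‖^2 := by
      have h3 := pyth V (projL W x)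
      have h4 := stepCW (projL W x) (projL_mem W x)
      have h9 : ‖r‖^2 = ‖projL W x‖^2 - ‖projL V (projL W x)‖^2 := by rw [hr]; linarith
      nlinarith
    have hpy := pyth W x
    calc ‖(projL V - projL W) x‖^2 = ‖u‖^2 + ‖r‖^2 := hsum
      _ ≤ (1 - d^2) * ‖x - projL W x‖^2 + (1 - d^2) * ‖projL W x‖^2 := add_le_add hub hrb
      _ = (1 - d^2) * ‖x‖^2 := by linear_combination (1 - d^2) * hpy
  -- operator norm bound
  have hopnorm : ‖projL V - projL W‖ ≤ Real.sqrt (1 - d^2) := by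
    refine ContinuousLinearMap.opNorm_le_bound _ (Real.sqrt_nonneg _) fun x => ?_
    refine sq_le_imp (norm_nonneg _) (by positivity) ?_
    rw [mul_pow, Real.sq_sqrt (by linarith)]
    exact hpoint x
  have ha2 : a^2 ≤ 1 - d^2 := by
    have h5 : |a| ≤ Real.sqrt (1 - d^2) := ha ▸ hopnorm
    have h6 : |a|^2 ≤ Real.sqrt (1 - d^2)^2 := by
      exact pow_le_pow_left₀ (abs_nonneg a) h5 2
    rw [sq_abs, Real.sq_sqrt (by linarith)] at h6
    exact h6
  have : |1 - a^2| = 1 - a^2 := abs_of_nonneg (by nlinarith [sq_nonneg d])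
  rw [this]
  linarith
end
end
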